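/- A partially ordered set P is injective with respect to order embeddings (i.e., for every order embedding f : A → C of posets and every monotone map g : A → P there exists a monotone map h : C → P with h ∘ f = g) if and only if P is a complete lattice. -/

import Mathlib

/-!
STATEMENT 6 (Banaschewski–Bruns): A poset `P` is injective with respect to
order embeddings (every monotone map into `P` extends along every order
embedding) iff `P` is a complete lattice (every subset has a least upper
bound).
-/

theorem stmt6 (P : Type u) [PartialOrder P] :
    (∀ (A C : Type u) [PartialOrder A] [PartialOrder C]
        (f : A ↪o C) (g : A →o P),
          ∃ h : C →o P, ∀ a, h (f a) = g a) ↔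
      (∀ S : Set P, ∃ p, IsLUB S p) := by
  constructor
  · intro H S
    -- embed P into LowerSet P via Iic
    let f : P ↪o LowerSet P :=
      { toFun := LowerSet.Iic
        inj' := fun a b h => le_antisymm
          (by simpa using h.le le_rfl) (by simpa using h.ge le_rfl)
        map_rel_iff' := by
          intro a b
          constructor
          · intro h; exact h (le_refl a)
          · intro h c hc; exact le_trans hc h }
    obtain ⟨h, hh⟩ := H P (LowerSet P) f OrderHom.id
    refine ⟨h (sSup (LowerSet.Iic '' S)), ?_, ?_⟩
    · intro s hs
      have : LowerSet.Iic s ≤ sSup (LowerSet.Iic '' S) :=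
        le_sSup ⟨s, hs, rfl⟩
      have h2 : h (LowerSet.Iic s) = s := hh s
      exact h2 ▸ h.monotone this
    · intro u hu
      have : sSup (LowerSet.Iic '' S) ≤ LowerSet.Iic u := by
        apply sSup_le
        rintro _ ⟨s, hs, rfl⟩
        intro c hc
        exact le_trans hc (hu hs)
      have h2 : h (LowerSet.Iic u) = u := hh u
      exact h2 ▸ h.monotone this
  · intro H A C _ _ f g
    choose lub hlub using H
    refine ⟨⟨fun c => lub {p | ∃ a, f a ≤ c ∧ g a = p}, ?_⟩, ?_⟩
    · intro c c' hcc'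
      exact (hlub _).mono (hlub _) (fun p ⟨a, ha, hp⟩ => ⟨a, le_trans ha hcc', hp⟩)
    · intro a
      have : IsLUB {p | ∃ a', f a' ≤ f a ∧ g a' = p} (g a) := by
        constructor
        · rintro _ ⟨a', ha', rfl⟩
          exact g.monotone (f.le_iff_le.mp ha')
        · intro u hu
          exact hu ⟨a, le_rfl, rfl⟩
      exact (hlub _).unique this
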